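/- Convergence of near-optimizers in the sensitivity lemma: let g : [0, ∞) → ℝ be nondecreasing and differentiable at 0 from the right with l := g'(0) > 0. For r > 0 set U(r) := inf_{γ > 0} ( ( g(r·γ) − g(0) ) / r + 1/γ ), and let (γ_r)_{r>0} be a family of positive reals of r-optimizers, i.e. ( g(r·γ_r) − g(0) ) / r + 1/γ_r − r ≤ U(r) for every r > 0. Then 1/γ_r → √l as r → 0⁺. -/
import Mathlib


open Filter

/-- `U g r = inf_{γ > 0} ( (g (r·γ) - g 0)/r + 1/γ )`. -/
noncomputable def diffQuotInf (g : ℝ → ℝ) (r : ℝ) : ℝ :=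
  sInf ((fun γ : ℝ => (g (r * γ) - g 0) / r + 1 / γ) '' Set.Ioi 0)

set_option maxHeartbeats 1000000 in
/-- **Convergence of near-optimizers in the sensitivity lemma.** Let `g` be
nondecreasing on `[0,∞)` and right-differentiable at `0` with derivative
`l > 0`.  If `(γ r)_{r>0}` is a family of positive reals such that each `γ r`
is an `r`-optimizer for `U(r) := inf_{γ>0} ( (g (r·γ) - g 0)/r + 1/γ )`, i.e.
`(g (r·γ r) - g 0)/r + 1/(γ r) - r ≤ U(r)`, then `1/(γ r) → √l` as `r → 0⁺`. -/
theorem near_optimizers_tendsto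
    (g : ℝ → ℝ) (hg : MonotoneOn g (Set.Ici 0))
    (l : ℝ) (hl : 0 < l) (hder : HasDerivWithinAt g l (Set.Ici 0) 0)
    (γ : ℝ → ℝ) (hγpos : ∀ r : ℝ, 0 < r → 0 < γ r)
    (hopt : ∀ r : ℝ, 0 < r →
      (g (r * γ r) - g 0) / r + 1 / γ r - r ≤ diffQuotInf g r) :
    Tendsto (fun r : ℝ => 1 / γ r) (nhdsWithin 0 (Set.Ioi 0))
      (nhds (Real.sqrt l)) := by
  rw [Metric.tendsto_nhdsWithin_nhds]
  intro ε hε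
  set s := Real.sqrt l with hs_def
  have hs : 0 < s := Real.sqrt_pos.2 hl
  have hs2 : s * s = l := Real.mul_self_sqrt hl.le
  clear_value s
  set K := 2 * s + 1 with hK_def
  have hK : 0 < K := by rw [hK_def]; linarith only [hs]
  clear_value K
  set ε' := min (l/2) (min (s/2) (min (ε*s/4) (ε^2*s/(25*K)))) with hε'_def
  have hε'pos : 0 < ε' := by
    apply lt_min (by linarith only [hl])
    refine lt_min (by linarith only [hs]) (lt_min ?_ ?_)
    · exact div_pos (mul_pos hε hs) (by norm_num)
    · exact div_pos (mul_pos (pow_pos hε 2) hs) (by linarith only [hK])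
  have hε'1 : ε' ≤ l/2 := min_le_left _ _
  have hε'2 : ε' ≤ s/2 := le_trans (min_le_right _ _) (min_le_left _ _)
  have hε'3 : ε' ≤ ε*s/4 := le_trans (min_le_right _ _)
    (le_trans (min_le_right _ _) (min_le_left _ _))
  have hε'4 : ε' ≤ ε^2*s/(25*K) := le_trans (min_le_right _ _)
    (le_trans (min_le_right _ _) (min_le_right _ _))
  clear_value ε'
  -- slope bound from derivative
  have hslope : Tendsto (fun t => (g t - g 0) / t) (nhdsWithin 0 (Set.Ioi 0)) (nhds l) := by
    have h := hasDerivWithinAt_iff_tendsto_slope.1 hder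
    have heq : Set.Ici (0:ℝ) \ {0} = Set.Ioi 0 := Set.Ici_sdiff_left
    rw [heq] at h
    refine h.congr' ?_
    filter_upwards [self_mem_nhdsWithin] with t ht
    simp [slope, ht, div_eq_inv_mul]
  obtain ⟨δ, hδpos, hδ⟩ : ∃ δ > 0, ∀ t : ℝ, 0 < t → t < δ →
      (l - ε') * t ≤ g t - g 0 ∧ g t - g 0 ≤ (l + ε') * t := by
    rw [Metric.tendsto_nhdsWithin_nhds] at hslope
    obtain ⟨δ, hδpos, hδ⟩ := hslope ε' hε'pos
    refine ⟨δ, hδpos, fun t ht htδ => ?_⟩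
    have h := hδ (Set.mem_Ioi.2 ht) (by rwa [Real.dist_eq, sub_zero, abs_of_pos ht])
    rw [Real.dist_eq, abs_lt] at h
    have heqt : ((g t - g 0)/t) * t = g t - g 0 := by field_simp
    constructor
    · have h1 : l - ε' ≤ (g t - g 0) / t := by linarith only [h.1]
      have h2 := mul_le_mul_of_nonneg_right h1 ht.le
      linarith only [h2, heqt]
    · have h1 : (g t - g 0) / t ≤ l + ε' := by linarith only [h.2]
      have h2 := mul_le_mul_of_nonneg_right h1 ht.le
      linarith only [h2, heqt]
  refine ⟨min (δ*s) (min (l*δ/(8*K)) (min (1/2) (ε^2/(25*K)))), ?_, ?_⟩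
  · refine lt_min (mul_pos hδpos hs) (lt_min ?_ (lt_min (by norm_num) ?_))
    · exact div_pos (mul_pos hl hδpos) (by linarith only [hK])
    · exact div_pos (pow_pos hε 2) (by linarith only [hK])
  intro r hr hrd
  have hrpos : (0:ℝ) < r := Set.mem_Ioi.1 hr
  rw [Real.dist_eq, sub_zero, abs_of_pos hrpos] at hrd
  have hr1 : r < δ * s := lt_of_lt_of_le hrd (min_le_left _ _)
  have hr2 : r < l*δ/(8*K) := lt_of_lt_of_le hrd (le_trans (min_le_right _ _) (min_le_left _ _))
  have hr3 : r < 1/2 := lt_of_lt_of_le hrd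
    (le_trans (min_le_right _ _) (le_trans (min_le_right _ _) (min_le_left _ _)))
  have hr4 : r < ε^2/(25*K) := lt_of_lt_of_le hrd
    (le_trans (min_le_right _ _) (le_trans (min_le_right _ _) (min_le_right _ _)))
  have hγr := hγpos r hrpos
  have hopt' := hopt r hrpos
  set γr := γ r with hγr_def
  clear_value γr
  set x := 1 / γr with hx_def
  clear_value x
  have hxpos : 0 < x := by rw [hx_def]; exact one_div_pos.2 hγr
  -- upper bound on diffQuotInf via γ0 = 1/s
  have hUb : diffQuotInf g r ≤ 2*s + ε'/s := by
    have hmem : (g (r * (1/s)) - g 0) / r + 1 / (1/s) ∈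
        ((fun γ : ℝ => (g (r * γ) - g 0) / r + 1 / γ) '' Set.Ioi 0) :=
      Set.mem_image_of_mem _ (Set.mem_Ioi.2 (one_div_pos.2 hs))
    have hbdd : BddBelow ((fun γ : ℝ => (g (r * γ) - g 0) / r + 1 / γ) '' Set.Ioi 0) := by
      refine ⟨0, fun y hy => ?_⟩
      obtain ⟨c, hc, rfl⟩ := hy
      have hc0 : (0:ℝ) < c := hc
      have hmono : g 0 ≤ g (r * c) := hg (Set.mem_Ici.2 le_rfl)
        (Set.mem_Ici.2 (mul_pos hrpos hc0).le) (mul_pos hrpos hc0).le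
      have h0 : 0 ≤ (g (r * c) - g 0) / r := div_nonneg (by linarith only [hmono]) hrpos.le
      have h1c : 0 < 1/c := one_div_pos.2 hc0
      simp only
      linarith only [h0, h1c]
    refine le_trans (csInf_le hbdd hmem) ?_
    have ht : r * (1/s) < δ := by
      rw [mul_one_div, div_lt_iff₀ hs]; linarith only [hr1]
    have htpos : 0 < r * (1/s) := mul_pos hrpos (one_div_pos.2 hs)
    have hub := (hδ _ htpos ht).2
    have h1 : (g (r * (1/s)) - g 0) / r ≤ (l + ε')/s := by
      rw [div_le_iff₀ hrpos]
      calc g (r * (1/s)) - g 0 ≤ (l + ε') * (r * (1/s)) := hub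
        _ = (l + ε')/s * r := by ring
    have h4 : l / s = s := by rw [div_eq_iff hs.ne']; exact hs2.symm
    have h5 : (l + ε')/s = s + ε'/s := by rw [add_div, h4]
    rw [one_div_one_div]
    linarith only [h1, h5]
  -- F(γr) ≤ m
  have hF : (g (r * γr) - g 0) / r + x ≤ 2*s + ε'/s + r := by
    linarith only [hopt', hUb]
  have hε's : ε'/s ≤ 1/2 := by
    rw [div_le_iff₀ hs]; linarith only [hε'2]
  have hm_le_K : 2*s + ε'/s + r ≤ K := by
    rw [hK_def]; linarith only [hε's, hr3]
  have hg0 : 0 ≤ (g (r * γr) - g 0) / r := by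
    have hmono : g 0 ≤ g (r * γr) := hg (Set.mem_Ici.2 le_rfl)
      (Set.mem_Ici.2 (mul_pos hrpos hγr).le) (mul_pos hrpos hγr).le
    exact div_nonneg (by linarith only [hmono]) hrpos.le
  have hxK : x ≤ K := by linarith only [hF, hm_le_K, hg0]
  -- show r * γr < δ
  have hrγδ : r * γr < δ := by
    by_contra h
    push_neg at h
    have ht0 : (0:ℝ) < δ/2 := by linarith only [hδpos]
    have ht0δ : δ/2 < δ := by linarith only [hδpos]
    have hlow := (hδ (δ/2) ht0 ht0δ).1
    have hmono : g (δ/2) ≤ g (r * γr) := hg (Set.mem_Ici.2 ht0.le)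
      (Set.mem_Ici.2 (mul_pos hrpos hγr).le) (by linarith only [h, hδpos])
    have h1 : (l - ε') * (δ/2) ≤ g (r * γr) - g 0 := by linarith only [hlow, hmono]
    have hla : l/2 ≤ l - ε' := by linarith only [hε'1]
    have h2 : l * δ / 4 ≤ g (r * γr) - g 0 := by
      have h2a := mul_le_mul_of_nonneg_right hla ht0.le
      linarith only [h1, h2a]
    have h3 : l * δ / (4*r) ≤ (g (r * γr) - g 0) / r := by
      rw [div_le_div_iff₀ (by linarith only [hrpos] : (0:ℝ) < 4*r) hrpos]
      have := mul_le_mul_of_nonneg_right h2 (by linarith only [hrpos] : (0:ℝ) ≤ 4*r)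
      linarith only [this]
    have hr2' : r * (8*K) < l * δ := by
      have h := (lt_div_iff₀ (by linarith only [hK] : (0:ℝ) < 8*K)).1 hr2
      linarith only [h]
    have h4 : 2*K < l * δ / (4*r) := by
      rw [lt_div_iff₀ (by linarith only [hrpos] : (0:ℝ) < 4*r)]
      linarith only [hr2']
    linarith only [h3, h4, hF, hm_le_K, hxpos, hK]
  -- lower slope bound at r*γr
  have hlow := (hδ (r*γr) (mul_pos hrpos hγr) hrγδ).1
  set a := l - ε' with ha_def
  clear_value a
  have hapos : 0 < a := by rw [ha_def]; linarith only [hε'1, hl]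
  have hkey : a * γr + x ≤ 2*s + ε'/s + r := by
    have h1 : a * γr ≤ (g (r * γr) - g 0) / r := by
      rw [le_div_iff₀ hrpos]
      calc a * γr * r = a * (r * γr) := by ring
        _ ≤ g (r * γr) - g 0 := hlow
    linarith only [h1, hF]
  set m := 2*s + ε'/s + r with hm_def
  clear_value m
  have hγrx : γr * x = 1 := by rw [hx_def]; field_simp
  have hq : a + x^2 ≤ m * x := by
    have h := mul_le_mul_of_nonneg_right hkey hxpos.le
    calc a + x^2 = (a * γr + x) * x := by linear_combination (-a) * hγrx
      _ ≤ m * x := h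
  set b := Real.sqrt a with hb_def
  have hbpos : 0 < b := Real.sqrt_pos.2 hapos
  have hb2 : b * b = a := Real.mul_self_sqrt hapos.le
  have hbs0 : b ≤ s := by
    rw [hb_def, hs_def]
    exact Real.sqrt_le_sqrt (by rw [ha_def]; linarith only [hε'pos])
  clear_value b
  have hq2 : (x - b)^2 ≤ x * (m - 2*b) := by
    have e : x * (m - 2*b) - (x - b)^2 = m * x - (a + x^2) := by
      linear_combination -hb2
    linarith only [hq, e]
  have hm2b : 0 ≤ m - 2*b := by
    have h0 : 0 ≤ x * (m - 2*b) := le_trans (sq_nonneg _) hq2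
    by_contra hneg
    push_neg at hneg
    have h1 : x * (m - 2*b) < 0 := mul_neg_of_pos_of_neg hxpos (by linarith only [hneg])
    linarith only [h0, h1]
  have hq3 : (x - b)^2 ≤ K * (m - 2*b) :=
    le_trans hq2 (mul_le_mul_of_nonneg_right hxK hm2b)
  -- bound m - 2b
  have hsb : s - b ≤ ε'/s := by
    have h1 : (s - b) * (s + b) = ε' := by linear_combination hs2 - hb2 - ha_def
    have h2 : s - b = ε' / (s + b) := by
      rw [eq_div_iff (by linarith only [hs, hbpos] : s + b ≠ 0)]; exact h1
    rw [h2]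
    apply div_le_div_of_nonneg_left hε'pos.le hs
    linarith only [hbpos]
  have hm2b' : m - 2*b ≤ 3*(ε'/s) + r := by
    rw [hm_def]; linarith only [hsb]
  have hε'b : ε'/s ≤ ε^2/(25*K) := by
    rw [div_le_div_iff₀ hs (by linarith only [hK] : (0:ℝ) < 25*K)]
    calc ε' * (25*K) ≤ (ε^2*s/(25*K)) * (25*K) :=
        mul_le_mul_of_nonneg_right hε'4 (by linarith only [hK])
      _ = ε^2 * s := by field_simp
  have hfinal : (x - b)^2 < (ε/2)^2 := by
    have hK4 : K * (m - 2*b) ≤ K * (3*(ε^2/(25*K)) + ε^2/(25*K)) := by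
      apply mul_le_mul_of_nonneg_left _ hK.le
      linarith only [hm2b', hε'b, hr4]
    have hKc : K * (3*(ε^2/(25*K)) + ε^2/(25*K)) = 4 * ε^2 / 25 := by
      field_simp; ring
    have hεsq := pow_pos hε 2
    have : 4 * ε^2 / 25 < (ε/2)^2 := by
      have h9 : (ε/2)^2 = ε^2/4 := by ring
      linarith only [hεsq, h9]
    linarith only [hq3, hK4, hKc, this]
  have hxb : |x - b| < ε/2 := by
    have h1 := Real.sqrt_lt_sqrt (sq_nonneg (x - b)) hfinal
    rwa [Real.sqrt_sq_eq_abs, Real.sqrt_sq (by linarith only [hε] : (0:ℝ) ≤ ε/2)] at h1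
  have hbs : |b - s| < ε/2 := by
    rw [abs_of_nonpos (by linarith only [hbs0]), neg_sub]
    have h6 : ε'/s ≤ ε/4 := by
      rw [div_le_iff₀ hs]; linarith only [hε'3]
    linarith only [hsb, h6, hε]
  rw [Real.dist_eq]
  have h7 : x - s = (x - b) + (b - s) := by ring
  calc |x - s| = |(x - b) + (b - s)| := by rw [h7]
    _ ≤ |x - b| + |b - s| := abs_add_le _ _
    _ < ε := by linarith only [hxb, hbs]
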